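/- There exists c = c(B) > 0 such that for all h ∈ (h_c, h_c + 1), c^{-1}(h - h_c)^{1/α} ≤ F(0,h) ≤ c (h - h_c)^{1/α}, where h_c = log(B-1) and α = log(2(B-1)/B)/log 2. -/

import Mathlib

open Filter Topology

lemma aux_pos (B : ℝ) (hB : 2 < B) (r : ℝ → ℕ → ℝ)
    (hr0 : ∀ h, r h 0 = Real.exp h)
    (hrec : ∀ h n, r h (n + 1) = ((r h n) ^ 2 + (B - 1)) / B)
    (h : ℝ) (hh : Real.log (B - 1) < h) : ∀ n, B - 1 < r h n := by
  intro n
  induction n with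
  | zero =>
    rw [hr0]
    have := Real.exp_lt_exp.mpr hh
    rwa [Real.exp_log (by linarith)] at this
  | succ n ih =>
    rw [hrec, lt_div_iff₀ (by linarith : (0:ℝ) < B)]
    nlinarith

lemma aux_low (B : ℝ) (hB : 2 < B) (r : ℝ → ℕ → ℝ)
    (hr0 : ∀ h, r h 0 = Real.exp h)
    (hrec : ∀ h n, r h (n + 1) = ((r h n) ^ 2 + (B - 1)) / B)
    (h : ℝ) (hh : Real.log (B - 1) < h) :
    ∀ n, (2 * (B - 1) / B) ^ n * (Real.exp h - (B - 1)) ≤ r h n - (B - 1) := by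
  intro n
  have hlam0 : (0:ℝ) ≤ 2 * (B - 1) / B := div_nonneg (by linarith) (by linarith)
  induction n with
  | zero => rw [hr0, pow_zero, one_mul]
  | succ n ih =>
    have hp := aux_pos B hB r hr0 hrec h hh n
    have hB0 : (0:ℝ) < B := by linarith
    have key : (2 * (B - 1) / B) * (r h n - (B - 1)) ≤ r h (n + 1) - (B - 1) := by
      rw [hrec, le_sub_iff_add_le, div_mul_eq_mul_div, div_add' _ _ _ hB0.ne',
        div_le_div_iff₀ hB0 hB0]
      nlinarith [sq_nonneg (r h n - (B - 1))]
    calc (2 * (B - 1) / B) ^ (n+1) * (Real.exp h - (B - 1))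
        = (2 * (B - 1) / B) * ((2 * (B - 1) / B) ^ n * (Real.exp h - (B - 1))) := by ring
      _ ≤ (2 * (B - 1) / B) * (r h n - (B - 1)) := mul_le_mul_of_nonneg_left ih hlam0
      _ ≤ r h (n + 1) - (B - 1) := key

lemma aux_up (B : ℝ) (hB : 2 < B) (r : ℝ → ℕ → ℝ)
    (hr0 : ∀ h, r h 0 = Real.exp h)
    (hrec : ∀ h n, r h (n + 1) = ((r h n) ^ 2 + (B - 1)) / B)
    (h : ℝ) (hh : Real.log (B - 1) < h) :
    ∀ n, r h n - (B - 1) ≤ (2 * (B - 1) / B) ^ n * (Real.exp h - (B - 1)) *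
      (1 + (B / (2 * (B - 1) * (B - 2))) * (r h n - (B - 1))) := by
  have hB0 : (0:ℝ) < B := by linarith
  have hq : (1:ℝ) < B - 1 := by linarith
  have hc0 : (2 * (B - 1) * (B - 2) : ℝ) ≠ 0 := by nlinarith
  have hK : (0:ℝ) < B / (2 * (B - 1) * (B - 2)) := by
    apply div_pos hB0; nlinarith
  set K := B / (2 * (B - 1) * (B - 2)) with hKdef
  have hK1 : K * (2 * (B - 1) * (B - 2)) = B := div_mul_cancel₀ B hc0
  have hδ0 : 0 ≤ Real.exp h - (B - 1) := by
    have := Real.exp_lt_exp.mpr hh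
    rw [Real.exp_log (by linarith)] at this
    linarith
  intro n
  induction n with
  | zero =>
    rw [hr0, pow_zero, one_mul]
    nlinarith [mul_nonneg hK.le (mul_nonneg hδ0 hδ0)]
  | succ n ih =>
    have hp := aux_pos B hB r hr0 hrec h hh n
    have hδ : 0 ≤ r h n - (B - 1) := by linarith
    set δ := r h n - (B - 1) with hδdef
    set L := (2 * (B - 1) / B) ^ n with hLdef
    have hL : 0 ≤ L := pow_nonneg (div_nonneg (by linarith) (by linarith)) n
    have hδ' : r h (n + 1) - (B - 1) = (δ ^ 2 + 2 * (B - 1) * δ) / B := by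
      rw [hrec, hδdef]; field_simp; ring
    set δ' := r h (n + 1) - (B - 1) with hδ'def
    have hBδ' : B * δ' = δ ^ 2 + 2 * (B - 1) * δ := by
      rw [hδ']; field_simp
    have hδ'0 : 0 ≤ δ' := by nlinarith
    have hz : (2 * (B - 1) * (B - 2) * K - B) * δ = 0 := by
      rw [show 2 * (B - 1) * (B - 2) * K = B by linarith [hK1]]; ring
    have h2 : 2 * (B - 1) * K * (B * δ') = 2 * (B - 1) * K * (δ ^ 2 + 2 * (B - 1) * δ) := by
      rw [hBδ']
    have SB : B * ((1 + K * δ) * (δ + 2 * (B - 1))) ≤ B * (2 * (B - 1) * (1 + K * δ')) := by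
      nlinarith [hz, h2, mul_nonneg (mul_nonneg hK.le (sq_nonneg δ)) (by linarith : (0:ℝ) ≤ B - 2)]
    have S : (1 + K * δ) * (δ + 2 * (B - 1)) ≤ 2 * (B - 1) * (1 + K * δ') :=
      le_of_mul_le_mul_left SB hB0
    have step1 : δ * (δ + 2 * (B - 1)) ≤ L * (Real.exp h - (B - 1)) * (1 + K * δ) * (δ + 2 * (B - 1)) :=
      mul_le_mul_of_nonneg_right ih (by linarith)
    have step2 : L * (Real.exp h - (B - 1)) * ((1 + K * δ) * (δ + 2 * (B - 1)))
        ≤ L * (Real.exp h - (B - 1)) * (2 * (B - 1) * (1 + K * δ')) :=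
      mul_le_mul_of_nonneg_left S (mul_nonneg hL hδ0)
    calc δ' = (δ * (δ + 2 * (B - 1))) / B := by rw [hδ']; ring
      _ ≤ (L * (Real.exp h - (B - 1)) * (2 * (B - 1) * (1 + K * δ'))) / B := by
          apply div_le_div_of_nonneg_right ?_ hB0.le
          calc δ * (δ + 2 * (B - 1)) ≤ L * (Real.exp h - (B - 1)) * (1 + K * δ) * (δ + 2 * (B - 1)) := step1
            _ = L * (Real.exp h - (B - 1)) * ((1 + K * δ) * (δ + 2 * (B - 1))) := by ring
            _ ≤ L * (Real.exp h - (B - 1)) * (2 * (B - 1) * (1 + K * δ')) := step2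
      _ = (2 * (B - 1) / B) ^ (n + 1) * (Real.exp h - (B - 1)) * (1 + K * δ') := by
          rw [pow_succ, hLdef]; field_simp

lemma aux_Flb (B : ℝ) (hB : 2 < B) (r : ℝ → ℕ → ℝ)
    (hr0 : ∀ h, r h 0 = Real.exp h)
    (hrec : ∀ h n, r h (n + 1) = ((r h n) ^ 2 + (B - 1)) / B)
    (h : ℝ) (hh : Real.log (B - 1) < h) (F : ℝ)
    (hF : Tendsto (fun n => Real.log (r h n) / 2 ^ n) atTop (𝓝 F)) :
    ∀ N, (Real.log (r h N) - Real.log B) / 2 ^ N ≤ F := by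
  have hB0 : (0:ℝ) < B := by linarith
  have hrpos : ∀ n, (0:ℝ) < r h n := fun n => by
    have := aux_pos B hB r hr0 hrec h hh n
    linarith
  have mono : Monotone (fun n => (Real.log (r h n) - Real.log B) / 2 ^ n) := by
    apply monotone_nat_of_le_succ
    intro n
    have hstep : (r h n) ^ 2 / B ≤ r h (n + 1) := by
      rw [hrec]
      apply div_le_div_of_nonneg_right (by linarith) hB0.le
    have hlog : 2 * Real.log (r h n) - Real.log B ≤ Real.log (r h (n + 1)) := by
      have := Real.log_le_log (div_pos (pow_pos (hrpos n) 2) hB0) hstep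
      rwa [Real.log_div (pow_pos (hrpos n) 2).ne' hB0.ne', Real.log_pow, Nat.cast_ofNat] at this
    rw [div_le_div_iff₀ (by positivity) (by positivity), pow_succ]
    nlinarith [pow_pos (show (0:ℝ) < 2 by norm_num) n, hlog,
      mul_le_mul_of_nonneg_right hlog (pow_pos (show (0:ℝ) < 2 by norm_num) n).le]
  have lim : Tendsto (fun n => (Real.log (r h n) - Real.log B) / 2 ^ n) atTop (𝓝 F) := by
    have h1 : (fun n => (Real.log (r h n) - Real.log B) / 2 ^ n)
        = fun n => Real.log (r h n) / 2 ^ n - Real.log B * (1 / 2 : ℝ) ^ n := by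
      funext n
      rw [sub_div, div_pow, one_pow]
      ring
    rw [h1]
    have h2 := (tendsto_pow_atTop_nhds_zero_of_lt_one
      (by norm_num : (0:ℝ) ≤ 1/2) (by norm_num : (1/2:ℝ) < 1)).const_mul (Real.log B)
    simpa using hF.sub h2
  exact fun N => mono.ge_of_tendsto lim N

lemma aux_Fub (B : ℝ) (hB : 2 < B) (r : ℝ → ℕ → ℝ)
    (hr0 : ∀ h, r h 0 = Real.exp h)
    (hrec : ∀ h n, r h (n + 1) = ((r h n) ^ 2 + (B - 1)) / B)
    (h : ℝ) (hh : Real.log (B - 1) < h) (F : ℝ)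
    (hF : Tendsto (fun n => Real.log (r h n) / 2 ^ n) atTop (𝓝 F)) :
    ∀ N, F ≤ Real.log (r h N) / 2 ^ N := by
  have hB0 : (0:ℝ) < B := by linarith
  have hrpos : ∀ n, (1:ℝ) < r h n := fun n => by
    have := aux_pos B hB r hr0 hrec h hh n
    linarith
  have anti : Antitone (fun n => Real.log (r h n) / 2 ^ n) := by
    apply antitone_nat_of_succ_le
    intro n
    have hstep : r h (n + 1) ≤ (r h n) ^ 2 := by
      rw [hrec, div_le_iff₀ hB0]
      nlinarith [hrpos n, sq_nonneg (r h n - 1), sq_nonneg (r h n)]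
    have hlog : Real.log (r h (n + 1)) ≤ 2 * Real.log (r h n) := by
      have := Real.log_le_log (by linarith [hrpos (n+1)]) hstep
      rwa [Real.log_pow, Nat.cast_ofNat] at this
    rw [div_le_div_iff₀ (by positivity) (by positivity), pow_succ]
    nlinarith [mul_le_mul_of_nonneg_right hlog (pow_pos (show (0:ℝ) < 2 by norm_num) n).le]
  exact fun N => anti.le_of_tendsto hF N

lemma aux_two_rpow (lam a : ℝ) (ha : 0 < a) :
    (2:ℝ) ^ (Real.log a / Real.log lam) = a ^ (Real.log 2 / Real.log lam) := by
  rw [Real.rpow_def_of_pos (by norm_num : (0:ℝ) < 2), Real.rpow_def_of_pos ha]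
  congr 1
  ring


set_option maxHeartbeats 2000000 in
/-- Critical behavior of the annealed free energy: there is `c = c(B) > 0` such that
for all `h ∈ (h_c, h_c + 1)`, `c⁻¹ (h - h_c)^{1/α} ≤ F(0,h) ≤ c (h - h_c)^{1/α}`,
where `h_c = log (B-1)` and `α = log (2(B-1)/B) / log 2`. -/
theorem stmt13 (B : ℝ) (hB : 2 < B) (r : ℝ → ℕ → ℝ)
    (hr0 : ∀ h, r h 0 = Real.exp h)
    (hrec : ∀ h n, r h (n + 1) = ((r h n) ^ 2 + (B - 1)) / B)
    (F : ℝ → ℝ)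
    (hF : ∀ h, Tendsto (fun n => Real.log (r h n) / 2 ^ n) atTop (𝓝 (F h))) :
    ∃ c : ℝ, 0 < c ∧ ∀ h : ℝ, Real.log (B - 1) < h → h < Real.log (B - 1) + 1 →
      c⁻¹ * (h - Real.log (B - 1)) ^ ((Real.log (2 * (B - 1) / B) / Real.log 2)⁻¹) ≤ F h ∧
      F h ≤ c * (h - Real.log (B - 1)) ^ ((Real.log (2 * (B - 1) / B) / Real.log 2)⁻¹) := by
  have hB0 : (0:ℝ) < B := by linarith
  have hq1 : (1:ℝ) < B - 1 := by linarith
  have hq0 : (0:ℝ) < B - 1 := by linarith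
  set lam := 2 * (B - 1) / B with hlamdef
  clear_value lam
  have hlam1 : 1 < lam := by rw [hlamdef, lt_div_iff₀ hB0]; linarith
  have hlam0 : (0:ℝ) < lam := by linarith
  have hloglam : 0 < Real.log lam := Real.log_pos hlam1
  have hlog2 : 0 < Real.log 2 := Real.log_pos (by norm_num)
  set p := (Real.log lam / Real.log 2)⁻¹ with hpdef
  clear_value p
  have hp : p = Real.log 2 / Real.log lam := by rw [hpdef, inv_div]
  have hp0 : 0 < p := by rw [hp]; exact div_pos hlog2 hloglam
  have h2B : (0:ℝ) < 2 * B - 1 := by linarith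
  set c1 := Real.log (2 * B - 1) - Real.log B with hc1def
  clear_value c1
  have hc1 : 0 < c1 := by
    have := Real.log_lt_log hB0 (by linarith : B < 2 * B - 1)
    rw [hc1def]; linarith
  have hc0 : (0:ℝ) < 2 * (B - 1) * (B - 2) := by nlinarith
  set K := B / (2 * (B - 1) * (B - 2)) with hKdef
  clear_value K
  have hK : 0 < K := by rw [hKdef]; exact div_pos hB0 hc0
  have hKq : (0:ℝ) < 2 * K * (B - 1) := mul_pos (mul_pos two_pos hK) hq0
  have hKqinv : (0:ℝ) < 1 / (2 * K * (B - 1)) := one_div_pos.mpr hKq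
  set M := (B - 1) + 1 / K with hMdef
  clear_value M
  have hM1 : 1 < M := by
    have : 0 < 1 / K := one_div_pos.mpr hK
    rw [hMdef]; linarith
  have hlogM : 0 < Real.log M := Real.log_pos hM1
  set c2 := Real.log (1 + 1 / (2 * K * (B - 1))) with hc2def
  clear_value c2
  have hc2 : 0 < c2 := by
    rw [hc2def]; exact Real.log_pos (by linarith)
  have hqBp : 0 < ((B - 1) / B) ^ p := Real.rpow_pos_of_pos (div_pos hq0 hB0) p
  set cL := min c1 (c1 / 2 * ((B - 1) / B) ^ p) with hcLdef
  clear_value cL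
  have hcL : 0 < cL := by
    rw [hcLdef]; exact lt_min hc1 (mul_pos (half_pos hc1) hqBp)
  have hc2p : 0 < c2 ^ p := Real.rpow_pos_of_pos hc2 p
  have hlogq : 0 < Real.log (B - 1) := Real.log_pos hq1
  set cU := max ((Real.log (B - 1) + 1) / c2 ^ p)
      (2 * Real.log M * (2 * K * Real.exp 1 * (B - 1)) ^ p) with hcUdef
  clear_value cU
  have hcU1 : 0 < (Real.log (B - 1) + 1) / c2 ^ p := div_pos (by linarith) hc2p
  have hcU : 0 < cU := by
    rw [hcUdef]; exact lt_of_lt_of_le hcU1 (le_max_left _ _)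
  set c := max cU cL⁻¹ with hcdef
  clear_value c
  have hcc : 0 < c := by rw [hcdef]; exact lt_of_lt_of_le hcU (le_max_left _ _)
  refine ⟨c, hcc, ?_⟩
  intro h hh1 hh2
  have hcinv : c⁻¹ ≤ cL := by
    have h1 : cL⁻¹ ≤ c := by rw [hcdef]; exact le_max_right _ _
    have := inv_anti₀ (inv_pos.mpr hcL) h1
    rwa [inv_inv] at this
  have hcUle : cU ≤ c := by rw [hcdef]; exact le_max_left _ _
  set x := h - Real.log (B - 1) with hxdef
  clear_value x
  have hx0 : 0 < x := by rw [hxdef]; linarith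
  have hx1 : x < 1 := by rw [hxdef]; linarith
  have hX0 : 0 ≤ x ^ p := Real.rpow_nonneg hx0.le p
  have hexph : Real.exp h = (B - 1) * Real.exp x := by
    have hx : h = Real.log (B - 1) + x := by rw [hxdef]; ring
    rw [hx, Real.exp_add, Real.exp_log hq0]
  set δ0 := Real.exp h - (B - 1) with hδ0def
  clear_value δ0
  have hexpx1 : 1 < Real.exp x := by
    rw [← Real.exp_zero]; exact Real.exp_lt_exp.mpr hx0
  have hδ0pos : 0 < δ0 := by
    rw [hδ0def, hexph]
    have e := mul_lt_mul_of_pos_left hexpx1 hq0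
    linarith only [e]
  have hδ0low : (B - 1) * x ≤ δ0 := by
    rw [hδ0def, hexph]
    have e := mul_le_mul_of_nonneg_left (Real.add_one_le_exp x) hq0.le
    linarith only [e]
  have hδ0up : δ0 ≤ (B - 1) * Real.exp 1 * x := by
    have h1 : 1 - x ≤ Real.exp (-x) := by linarith only [Real.add_one_le_exp (-x)]
    have h2 : (1 - x) * Real.exp x ≤ Real.exp (-x) * Real.exp x :=
      mul_le_mul_of_nonneg_right h1 (Real.exp_pos x).le
    rw [← Real.exp_add, neg_add_cancel, Real.exp_zero] at h2
    have h3 : Real.exp x ≤ Real.exp 1 := Real.exp_le_exp.mpr hx1.le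
    have e5 : x * Real.exp x ≤ x * Real.exp 1 := mul_le_mul_of_nonneg_left h3 hx0.le
    have e6 : Real.exp x - 1 ≤ x * Real.exp 1 := by linarith only [h2, e5]
    have e7 := mul_le_mul_of_nonneg_left e6 hq0.le
    rw [hδ0def, hexph]
    linarith only [e7]
  constructor
  · -- LOWER BOUND
    have Flb := aux_Flb B hB r hr0 hrec h hh1 (F h) (hF h)
    rcases le_or_gt B δ0 with hcase | hcase
    · have hFb := Flb 0
      rw [hr0 h, pow_zero, div_one, Real.log_exp] at hFb
      rw [hδ0def] at hcase
      have hexpge : 2 * B - 1 ≤ Real.exp h := by linarith only [hcase, hB]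
      have hhl : Real.log (2 * B - 1) ≤ h := by
        calc Real.log (2 * B - 1) ≤ Real.log (Real.exp h) := Real.log_le_log h2B hexpge
          _ = h := Real.log_exp h
      have hF1 : c1 ≤ F h := by rw [hc1def]; linarith only [hFb, hhl]
      have hXle1 : x ^ p ≤ 1 := Real.rpow_le_one hx0.le hx1.le hp0.le
      have hmm : c⁻¹ * x ^ p ≤ c1 * 1 :=
        mul_le_mul (le_trans hcinv (by rw [hcLdef]; exact min_le_left _ _)) hXle1 hX0 hc1.le
      linarith only [hmm, hF1]
    · set t := Real.log (B / δ0) / Real.log lam with htdef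
      have hBd0 : 0 < B / δ0 := div_pos hB0 hδ0pos
      have ht0 : 0 < t := div_pos (Real.log_pos ((one_lt_div hδ0pos).mpr hcase)) hloglam
      set N := ⌈t⌉₊ with hNdef
      have hN1 : t ≤ N := Nat.le_ceil t
      have hN2 : (N:ℝ) ≤ t + 1 := (Nat.ceil_lt_add_one ht0.le).le
      have hlamt : lam ^ t = B / δ0 := by
        rw [Real.rpow_def_of_pos hlam0, htdef, mul_comm, div_mul_cancel₀ _ hloglam.ne',
          Real.exp_log hBd0]
      have hlamN : B / δ0 ≤ lam ^ N := by
        have := (Real.rpow_le_rpow_left_iff hlam1).mpr hN1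
        rwa [hlamt, Real.rpow_natCast] at this
      have hδN : B ≤ r h N - (B - 1) := by
        have hl := aux_low B hB r hr0 hrec h hh1 N
        rw [← hlamdef, ← hδ0def] at hl
        calc B = (B / δ0) * δ0 := (div_mul_cancel₀ B hδ0pos.ne').symm
          _ ≤ lam ^ N * δ0 := mul_le_mul_of_nonneg_right hlamN hδ0pos.le
          _ ≤ r h N - (B - 1) := hl
      have hrN : 2 * B - 1 ≤ r h N := by linarith only [hδN, hB]
      have hlogrN : c1 ≤ Real.log (r h N) - Real.log B := by
        have e := Real.log_le_log h2B hrN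
        rw [hc1def]; linarith only [e]
      have h2Npos : (0:ℝ) < 2 ^ N := by positivity
      have hFge : c1 / 2 ^ N ≤ F h :=
        le_trans (div_le_div_of_nonneg_right hlogrN h2Npos.le) (Flb N)
      have h2tp : (2:ℝ) ^ t = (B / δ0) ^ p := by
        rw [htdef, aux_two_rpow lam (B / δ0) hBd0, hp]
      have hBdp : 0 < (B / δ0) ^ p := Real.rpow_pos_of_pos hBd0 p
      have h2N : (2:ℝ) ^ N ≤ 2 * (B / δ0) ^ p := by
        have e1 : (2:ℝ) ^ (N:ℝ) ≤ 2 ^ (t + 1) :=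
          (Real.rpow_le_rpow_left_iff one_lt_two).mpr hN2
        rw [Real.rpow_natCast, Real.rpow_add (by norm_num : (0:ℝ) < 2), Real.rpow_one,
          h2tp] at e1
        linarith only [e1]
      have hinv : (δ0 / B) ^ p = ((B / δ0) ^ p)⁻¹ := by
        rw [← Real.inv_rpow hBd0.le, inv_div]
      have key : c1 / 2 * (δ0 / B) ^ p ≤ c1 / 2 ^ N := by
        have e2 : c1 / 2 * (δ0 / B) ^ p = c1 / (2 * (B / δ0) ^ p) := by
          rw [hinv]; field_simp
        rw [e2]
        exact div_le_div_of_nonneg_left hc1.le h2Npos h2N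
      have hsplit : c1 / 2 * ((B - 1) / B) ^ p * x ^ p ≤ c1 / 2 * (δ0 / B) ^ p := by
        have e3 : ((B - 1) / B) ^ p * x ^ p = ((B - 1) / B * x) ^ p :=
          (Real.mul_rpow (div_pos hq0 hB0).le hx0.le).symm
        have e4 : (B - 1) / B * x ≤ δ0 / B := by
          rw [div_mul_eq_mul_div]
          exact div_le_div_of_nonneg_right hδ0low hB0.le
        have e5 : ((B - 1) / B * x) ^ p ≤ (δ0 / B) ^ p :=
          Real.rpow_le_rpow (mul_nonneg (div_pos hq0 hB0).le hx0.le) e4 hp0.le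
        calc c1 / 2 * ((B - 1) / B) ^ p * x ^ p
            = c1 / 2 * (((B - 1) / B) ^ p * x ^ p) := by ring
          _ = c1 / 2 * ((B - 1) / B * x) ^ p := by rw [e3]
          _ ≤ c1 / 2 * (δ0 / B) ^ p := mul_le_mul_of_nonneg_left e5 (half_pos hc1).le
      have hfin : c⁻¹ * x ^ p ≤ c1 / 2 * ((B - 1) / B) ^ p * x ^ p := by
        apply mul_le_mul_of_nonneg_right _ hX0
        exact le_trans hcinv (by rw [hcLdef]; exact min_le_right _ _)
      linarith only [hfin, hsplit, key, hFge]
  · -- UPPER BOUND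
    have Fub := aux_Fub B hB r hr0 hrec h hh1 (F h) (hF h)
    rcases le_or_gt 1 (2 * K * δ0) with hcase | hcase
    · have hFb := Fub 0
      rw [hr0 h, pow_zero, div_one, Real.log_exp] at hFb
      have hδ0ge : 1 / (2 * K) ≤ δ0 := by
        rw [div_le_iff₀ (mul_pos two_pos hK)]
        linarith only [hcase]
      have hxc2 : c2 ≤ x := by
        have hexpxge : 1 + 1 / (2 * K * (B - 1)) ≤ Real.exp x := by
          have e1 : Real.exp x = 1 + δ0 / (B - 1) := by
            rw [hδ0def, hexph]
            field_simp; ring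
          rw [e1]
          have hdd : 1 / (2 * K * (B - 1)) ≤ δ0 / (B - 1) := by
            rw [div_le_div_iff₀ hKq hq0]
            calc 1 * (B - 1) = (1 / (2 * K)) * (2 * K * (B - 1)) := by
                  field_simp
              _ ≤ δ0 * (2 * K * (B - 1)) :=
                  mul_le_mul_of_nonneg_right hδ0ge hKq.le
          linarith only [hdd]
        calc c2 = Real.log (1 + 1 / (2 * K * (B - 1))) := hc2def
          _ ≤ Real.log (Real.exp x) := Real.log_le_log (by linarith only [hKqinv]) hexpxge
          _ = x := Real.log_exp x
      have hXc2 : c2 ^ p ≤ x ^ p := Real.rpow_le_rpow hc2.le hxc2 hp0.le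
      have hgoal : Real.log (B - 1) + 1 ≤ c * x ^ p := by
        calc Real.log (B - 1) + 1 = (Real.log (B - 1) + 1) / c2 ^ p * c2 ^ p := by
              rw [div_mul_cancel₀ _ hc2p.ne']
          _ ≤ c * x ^ p :=
              mul_le_mul (le_trans (by rw [hcUdef]; exact le_max_left _ _) hcUle)
                hXc2 hc2p.le hcc.le
      linarith only [hFb, hgoal, hh2]
    · have h2Kδ0 : 0 < 2 * K * δ0 := mul_pos (mul_pos two_pos hK) hδ0pos
      set s := Real.log (1 / (2 * K * δ0)) / Real.log lam with hsdef
      have hinv1 : 1 < 1 / (2 * K * δ0) := by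
        rw [lt_div_iff₀ h2Kδ0]; linarith only [hcase]
      have hs0 : 0 < s := div_pos (Real.log_pos hinv1) hloglam
      set N := ⌊s⌋₊ with hNdef
      have hN1 : (N:ℝ) ≤ s := Nat.floor_le hs0.le
      have hN2 : s < N + 1 := Nat.lt_floor_add_one s
      have hlams : lam ^ s = 1 / (2 * K * δ0) := by
        rw [Real.rpow_def_of_pos hlam0, hsdef, mul_comm, div_mul_cancel₀ _ hloglam.ne',
          Real.exp_log (one_div_pos.mpr h2Kδ0)]
      have hlamN : (lam:ℝ) ^ N ≤ 1 / (2 * K * δ0) := by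
        have := (Real.rpow_le_rpow_left_iff hlam1).mpr hN1
        rwa [hlams, Real.rpow_natCast] at this
      have hδNnn : 0 ≤ r h N - (B - 1) := by
        have e := aux_pos B hB r hr0 hrec h hh1 N; linarith only [e, hq0]
      have hδN : r h N - (B - 1) ≤ 1 / K := by
        have hu := aux_up B hB r hr0 hrec h hh1 N
        rw [← hlamdef, ← hδ0def, ← hKdef] at hu
        have hlamNδ0 : lam ^ N * δ0 ≤ 1 / (2 * K) := by
          calc lam ^ N * δ0 ≤ (1 / (2 * K * δ0)) * δ0 :=
              mul_le_mul_of_nonneg_right hlamN hδ0pos.le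
            _ = 1 / (2 * K) := by
                field_simp
        have hu2 : r h N - (B - 1) ≤ 1 / (2 * K) * (1 + K * (r h N - (B - 1))) := by
          calc r h N - (B - 1)
              ≤ lam ^ N * δ0 * (1 + K * (r h N - (B - 1))) := hu
            _ ≤ 1 / (2 * K) * (1 + K * (r h N - (B - 1))) :=
                mul_le_mul_of_nonneg_right hlamNδ0
                  (by linarith only [mul_nonneg hK.le hδNnn])
        have e : 1 / (2 * K) * (1 + K * (r h N - (B - 1)))
            = 1 / (2 * K) + (r h N - (B - 1)) / 2 := by
          field_simp
        have e2 : 2 * (1 / (2 * K)) = 1 / K := by field_simp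
        rw [e] at hu2
        linarith only [hu2, e2]
      have hrNM : r h N ≤ M := by rw [hMdef]; linarith only [hδN]
      have hrNpos : 0 < r h N := by
        have e := aux_pos B hB r hr0 hrec h hh1 N; linarith only [e, hq0]
      have h2Npos : (0:ℝ) < 2 ^ N := by positivity
      have hFle : F h ≤ Real.log M / 2 ^ N :=
        le_trans (Fub N) (div_le_div_of_nonneg_right (Real.log_le_log hrNpos hrNM) h2Npos.le)
      have hKδp : 0 < (2 * K * δ0) ^ p := Real.rpow_pos_of_pos h2Kδ0 p
      have h2sp : (2:ℝ) ^ s = ((2 * K * δ0) ^ p)⁻¹ := by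
        rw [hsdef, aux_two_rpow lam (1 / (2 * K * δ0)) (one_div_pos.mpr h2Kδ0), hp,
          one_div, Real.inv_rpow h2Kδ0.le]
      have h2Nge : ((2 * K * δ0) ^ p)⁻¹ / 2 ≤ 2 ^ N := by
        have e1 : (2:ℝ) ^ (s - 1) ≤ 2 ^ (N:ℝ) :=
          (Real.rpow_le_rpow_left_iff one_lt_two).mpr (by linarith)
        rw [Real.rpow_natCast, Real.rpow_sub (by norm_num : (0:ℝ) < 2), Real.rpow_one,
          h2sp] at e1
        linarith only [e1]
      have hstep : Real.log M / 2 ^ N ≤ 2 * Real.log M * (2 * K * δ0) ^ p := by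
        have e2 : Real.log M / (((2 * K * δ0) ^ p)⁻¹ / 2)
            = 2 * Real.log M * (2 * K * δ0) ^ p := by
          field_simp
        calc Real.log M / 2 ^ N ≤ Real.log M / (((2 * K * δ0) ^ p)⁻¹ / 2) :=
            div_le_div_of_nonneg_left hlogM.le (div_pos (inv_pos.mpr hKδp) two_pos) h2Nge
          _ = 2 * Real.log M * (2 * K * δ0) ^ p := e2
      have hsplit : (2 * K * δ0) ^ p ≤ (2 * K * Real.exp 1 * (B - 1)) ^ p * x ^ p := by
        have e3 : (2 * K * Real.exp 1 * (B - 1)) ^ p * x ^ p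
            = (2 * K * Real.exp 1 * (B - 1) * x) ^ p :=
          (Real.mul_rpow
            (mul_nonneg (mul_nonneg (mul_nonneg two_pos.le hK.le) (Real.exp_pos 1).le) hq0.le)
            hx0.le).symm
        rw [e3]
        apply Real.rpow_le_rpow h2Kδ0.le _ hp0.le
        linarith only [mul_le_mul_of_nonneg_left hδ0up (mul_pos two_pos hK).le]
      have hfin : 2 * Real.log M * (2 * K * δ0) ^ p ≤ c * x ^ p := by
        calc 2 * Real.log M * (2 * K * δ0) ^ p
            ≤ 2 * Real.log M * ((2 * K * Real.exp 1 * (B - 1)) ^ p * x ^ p) :=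
              mul_le_mul_of_nonneg_left hsplit (mul_pos two_pos hlogM).le
          _ = 2 * Real.log M * (2 * K * Real.exp 1 * (B - 1)) ^ p * x ^ p := by ring
          _ ≤ c * x ^ p := by
              apply mul_le_mul_of_nonneg_right _ hX0
              exact le_trans (by rw [hcUdef]; exact le_max_right _ _) hcUle
      linarith only [hFle, hstep, hfin]
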